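/- Let σx := !![0,1;1,0] and σz := !![1,0;0,−1] as matrices in Matrix (Fin 2) (Fin 2) ℂ, and on ℂ⁴ (index type Fin 2 × Fin 2, via the Kronecker product ⊗ₖ) set X₁ := σx ⊗ₖ 1, X₂ := 1 ⊗ₖ σx, Z := σz ⊗ₖ σz, and for θ : ℝ let U θ := Matrix.exp ((Complex.I·θ)•Z). Then for all θ : ℝ, X₁·(U θ·X₂) − (U θ·X₂)·X₁ = ((−2)·Complex.I·(Real.sin θ : ℂ)) • (Z·X₁·X₂). -/

import Mathlib

open Matrix Kronecker NormedSpace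

noncomputable section

/-- Pauli x. -/
def σx : Matrix (Fin 2) (Fin 2) ℂ := !![0, 1; 1, 0]

/-- Pauli z. -/
def σz : Matrix (Fin 2) (Fin 2) ℂ := !![1, 0; 0, -1]

/-- Pauli x on the first (visible) qubit. -/
def X₁ : Matrix (Fin 2 × Fin 2) (Fin 2 × Fin 2) ℂ := σx ⊗ₖ 1

/-- Pauli x on the second (hidden) qubit. -/
def X₂ : Matrix (Fin 2 × Fin 2) (Fin 2 × Fin 2) ℂ := (1 : Matrix (Fin 2) (Fin 2) ℂ) ⊗ₖ σx

/-- The Ising interaction `σz ⊗ σz`. -/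
def Z : Matrix (Fin 2 × Fin 2) (Fin 2 × Fin 2) ℂ := σz ⊗ₖ σz

/-- The evolution `e^{iθZ}`. -/
def U (θ : ℝ) : Matrix (Fin 2 × Fin 2) (Fin 2 × Fin 2) ℂ := exp ((Complex.I * θ) • Z)

/-- The diagonal entries of `Z`. -/
def d : Fin 2 × Fin 2 → ℂ := fun p => σz p.1 p.1 * σz p.2 p.2

lemma hZdiag : Z = Matrix.diagonal d := by
  ext ⟨a, b⟩ ⟨c, e⟩
  fin_cases a <;> fin_cases b <;> fin_cases c <;> fin_cases e <;>
    simp [Z, d, σz, Matrix.kroneckerMap_apply, Matrix.diagonal, Prod.ext_iff]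

lemma expA (t : ℝ) : exp (Complex.I * t) =
    Complex.cos t + Complex.I * Complex.sin t := by
  rw [← Complex.exp_eq_exp_ℂ, mul_comm, Complex.exp_mul_I]; ring

lemma expB (t : ℝ) : exp (-(Complex.I * t)) =
    Complex.cos t - Complex.I * Complex.sin t := by
  rw [show -(Complex.I * (t : ℂ)) = (t : ℂ) * -Complex.I by ring, ← Complex.exp_eq_exp_ℂ]
  rw [show (t : ℂ) * -Complex.I = (-t : ℂ) * Complex.I by ring, Complex.exp_mul_I,
    Complex.cos_neg, Complex.sin_neg]
  ring

lemma hU (θ : ℝ) : U θ = (Real.cos θ : ℂ) • (1 : Matrix (Fin 2 × Fin 2) (Fin 2 × Fin 2) ℂ)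
    + (Complex.I * Real.sin θ) • Z := by
  rw [U, hZdiag, ← Matrix.diagonal_smul, Matrix.exp_diagonal]
  ext ⟨a, b⟩ ⟨c, e⟩
  fin_cases a <;> fin_cases b <;> fin_cases c <;> fin_cases e <;>
    simp [d, σz, Matrix.diagonal, Matrix.one_apply, Prod.ext_iff, Pi.smul_apply,
      mul_comm, mul_neg, mul_one] <;>
    first
      | (rw [expA]; try ring)
      | (rw [expB]; try ring)

lemma hσ : σx * σz = -(σz * σx) := by
  ext i j
  fin_cases i <;> fin_cases j <;>
    simp [σx, σz, Matrix.mul_apply, Fin.sum_univ_two]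

lemma e3 : X₂ * X₁ = X₁ * X₂ := by
  simp [X₁, X₂, ← Matrix.mul_kronecker_mul]

lemma hX1Z : X₁ * Z = -(Z * X₁) := by
  rw [X₁, Z, ← Matrix.mul_kronecker_mul, ← Matrix.mul_kronecker_mul, one_mul, hσ,
    show -(σz * σx) = (-1 : ℂ) • (σz * σx) by simp, Matrix.smul_kronecker]
  simp

/-- Two-qubit core of Lemma B.2(1): the commutator of the probe Pauli with the
Heisenberg-evolved hidden Pauli equals `-2i sin θ · Z X₁ X₂`. -/
theorem pauli_commutator_evolved (θ : ℝ) :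
    X₁ * (U θ * X₂) - (U θ * X₂) * X₁ =
      ((-2) * Complex.I * (Real.sin θ : ℂ)) • (Z * X₁ * X₂) := by
  have e1 : X₁ * (Z * X₂) = -(Z * X₁ * X₂) := by
    rw [← Matrix.mul_assoc, hX1Z, Matrix.neg_mul, Matrix.mul_assoc]
  have e2 : Z * X₂ * X₁ = Z * X₁ * X₂ := by
    rw [Matrix.mul_assoc, e3, ← Matrix.mul_assoc]
  rw [hU]
  rw [Matrix.add_mul, Matrix.smul_mul, Matrix.smul_mul, Matrix.one_mul,
    Matrix.mul_add, Matrix.mul_smul, Matrix.mul_smul, e1,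
    Matrix.add_mul, Matrix.smul_mul, Matrix.smul_mul, e3, e2]
  module

end
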